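/- Let X be a space of cardinality less than 𝔡 and let 𝒦 be a family of subsets of X closed under finite unions. If X is star-σ𝒦 (for every open cover U there is a set K which is a countable union of members of 𝒦 with St(K,U) = X), then X satisfies SS*_𝒦(O,O): for each sequence (Uₙ) of open covers there are Kₙ ∈ 𝒦 with {St(Kₙ,Uₙ) : n ∈ ω} an open cover of X. -/

import Mathlib

open Set Filter

variable {X : Type u}

def star {X : Type u} (A : Set X) (U : Set (Set X)) : Set X :=
  ⋃₀ {u ∈ U | (u ∩ A).Nonempty}

def IsOpenCover {X : Type u} [TopologicalSpace X] (U : Set (Set X)) : Prop :=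
  (∀ u ∈ U, IsOpen u) ∧ ⋃₀ U = univ

noncomputable def domNum : Cardinal :=
  sInf {c | ∃ D : Set (ℕ → ℕ), Cardinal.mk D = c ∧
    ∀ f : ℕ → ℕ, ∃ g ∈ D, ∀ᶠ n in atTop, f n ≤ g n}

noncomputable def boundNum : Cardinal :=
  sInf {c | ∃ B : Set (ℕ → ℕ), Cardinal.mk B = c ∧
    ¬ ∃ g : ℕ → ℕ, ∀ f ∈ B, ∀ᶠ n in atTop, f n ≤ g n}

noncomputable def covMeager : Cardinal :=
  sInf {c | ∃ F : Set (ℕ → ℕ), Cardinal.mk F = c ∧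
    ¬ ∃ g : ℕ → ℕ, ∀ f ∈ F, {n | g n = f n}.Infinite}

def StronglyStarLindelof (X : Type u) [TopologicalSpace X] : Prop :=
  ∀ U : Set (Set X), IsOpenCover U →
    ∃ C : Set X, C.Countable ∧ star C U = univ

def AbsStronglyStarLindelof (X : Type u) [TopologicalSpace X] : Prop :=
  ∀ U : Set (Set X), IsOpenCover U → ∀ D : Set X, Dense D →
    ∃ C : Set X, C ⊆ D ∧ C.Countable ∧ star C U = univ

def StronglyStarMenger (X : Type u) [TopologicalSpace X] : Prop :=
  ∀ U : ℕ → Set (Set X), (∀ n, IsOpenCover (U n)) →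
    ∃ F : ℕ → Finset X, ⋃ n, star (↑(F n)) (U n) = univ

def AbsStronglyStarMenger (X : Type u) [TopologicalSpace X] : Prop :=
  ∀ U : ℕ → Set (Set X), (∀ n, IsOpenCover (U n)) → ∀ D : Set X, Dense D →
    ∃ F : ℕ → Finset X, (∀ n, ↑(F n) ⊆ D) ∧ ⋃ n, star (↑(F n)) (U n) = univ

def SelStronglyStarMenger (X : Type u) [TopologicalSpace X] : Prop :=
  ∀ U : ℕ → Set (Set X), (∀ n, IsOpenCover (U n)) →
    ∀ D : ℕ → Set X, (∀ n, Dense (D n)) →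
      ∃ F : ℕ → Finset X, (∀ n, ↑(F n) ⊆ D n) ∧ ⋃ n, star (↑(F n)) (U n) = univ

def StronglyStarHurewicz (X : Type u) [TopologicalSpace X] : Prop :=
  ∀ U : ℕ → Set (Set X), (∀ n, IsOpenCover (U n)) →
    ∃ F : ℕ → Finset X, ∀ x : X, ∀ᶠ n in atTop, x ∈ star (↑(F n)) (U n)

def SelStronglyStarHurewicz (X : Type u) [TopologicalSpace X] : Prop :=
  ∀ U : ℕ → Set (Set X), (∀ n, IsOpenCover (U n)) →
    ∀ D : ℕ → Set X, (∀ n, Dense (D n)) →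
      ∃ F : ℕ → Finset X, (∀ n, ↑(F n) ⊆ D n) ∧
        ∀ x : X, ∀ᶠ n in atTop, x ∈ star (↑(F n)) (U n)

def StronglyStarRothberger (X : Type u) [TopologicalSpace X] : Prop :=
  ∀ U : ℕ → Set (Set X), (∀ n, IsOpenCover (U n)) →
    ∃ x : ℕ → X, ⋃ n, star {x n} (U n) = univ

def SelStronglyStarRothberger (X : Type u) [TopologicalSpace X] : Prop :=
  ∀ U : ℕ → Set (Set X), (∀ n, IsOpenCover (U n)) →
    ∀ D : ℕ → Set X, (∀ n, Dense (D n)) →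
      ∃ d : ℕ → X, (∀ n, d n ∈ D n) ∧ ⋃ n, star {d n} (U n) = univ

def DiscreteIn {X : Type u} [TopologicalSpace X] (C : Set X) : Prop :=
  ∀ x ∈ C, ∃ O : Set X, IsOpen O ∧ O ∩ C = {x}

def CountableExtent (X : Type u) [TopologicalSpace X] : Prop :=
  ∀ C : Set X, IsClosed C → DiscreteIn C → C.Countable

def SelSScdOGamma (X : Type u) [TopologicalSpace X] : Prop :=
  ∀ U : ℕ → Set (Set X), (∀ n, IsOpenCover (U n)) →
    ∀ D : ℕ → Set X, (∀ n, Dense (D n)) →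
      ∃ C : ℕ → Set X, (∀ n, C n ⊆ D n ∧ IsClosed (C n) ∧ DiscreteIn (C n)) ∧
        ∀ x : X, ∀ᶠ n in atTop, x ∈ star (C n) (U n)

def SelSScdOO (X : Type u) [TopologicalSpace X] : Prop :=
  ∀ U : ℕ → Set (Set X), (∀ n, IsOpenCover (U n)) →
    ∀ D : ℕ → Set X, (∀ n, Dense (D n)) →
      ∃ C : ℕ → Set X, (∀ n, C n ⊆ D n ∧ IsClosed (C n) ∧ DiscreteIn (C n)) ∧
        ⋃ n, star (C n) (U n) = univ

def StarSigmaK (X : Type u) [TopologicalSpace X] (K : Set (Set X)) : Prop :=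
  ∀ U : Set (Set X), IsOpenCover U →
    ∃ E : ℕ → Set X, (∀ m, E m ∈ K) ∧ star (⋃ m, E m) U = univ

def AbsStarSigmaK (X : Type u) [TopologicalSpace X] (K : Set (Set X)) : Prop :=
  ∀ D : Set X, Dense D → ∀ U : Set (Set X), IsOpenCover U →
    ∃ E : ℕ → Set X, (∀ m, E m ∈ K ∧ E m ⊆ D) ∧ star (⋃ m, E m) U = univ

def AbsNbhdStarMenger (X : Type u) [TopologicalSpace X] : Prop :=
  ∀ U : ℕ → Set (Set X), (∀ n, IsOpenCover (U n)) → ∀ D : Set X, Dense D →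
    ∃ F : ℕ → Finset X, (∀ n, ↑(F n) ⊆ D) ∧
      ∀ O : ℕ → Set X, (∀ n, IsOpen (O n) ∧ ↑(F n) ⊆ O n) →
        ⋃ n, star (O n) (U n) = univ

def AbsNbhdStarHurewicz (X : Type u) [TopologicalSpace X] : Prop :=
  ∀ U : ℕ → Set (Set X), (∀ n, IsOpenCover (U n)) → ∀ D : Set X, Dense D →
    ∃ F : ℕ → Finset X, (∀ n, ↑(F n) ⊆ D) ∧
      ∀ O : ℕ → Set X, (∀ n, IsOpen (O n) ∧ ↑(F n) ⊆ O n) →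
        ∀ x : X, ∀ᶠ n in atTop, x ∈ star (O n) (U n)


/-- Accumulated (finite) unions of a sequence of sets. -/
def accU {X : Type u} (E : ℕ → Set X) : ℕ → Set X
  | 0 => E 0
  | m + 1 => accU E m ∪ E (m + 1)

lemma accU_mono {X : Type u} (E : ℕ → Set X) {m m' : ℕ} (h : m ≤ m') :
    accU E m ⊆ accU E m' := by
  induction m' with
  | zero => simp [Nat.le_zero.mp h]
  | succ k ih =>
    rcases Nat.lt_or_ge m (k + 1) with h' | h'
    · exact (ih (Nat.lt_succ_iff.mp h')).trans (subset_union_left)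
    · have : m = k + 1 := le_antisymm h h'
      simp [this]

lemma subset_accU {X : Type u} (E : ℕ → Set X) (m : ℕ) : E m ⊆ accU E m := by
  cases m with
  | zero => exact subset_rfl
  | succ k => exact subset_union_right

lemma star_mono' {X : Type u} {A B : Set X} (h : A ⊆ B) (U : Set (Set X)) :
    star A U ⊆ star B U := by
  rintro x ⟨u, ⟨hu, y, hyu, hyA⟩, hxu⟩
  exact ⟨u, ⟨hu, y, hyu, h hyA⟩, hxu⟩

theorem stmt3 {X : Type u} [TopologicalSpace X] (K : Set (Set X))
    (hK : ∀ A ∈ K, ∀ B ∈ K, A ∪ B ∈ K)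
    (hcard : Cardinal.mk X < Cardinal.lift.{u} domNum) (hstar : StarSigmaK X K) :
    ∀ U : ℕ → Set (Set X), (∀ n, IsOpenCover (U n)) →
      ∃ Ks : ℕ → Set X, (∀ n, Ks n ∈ K) ∧ ⋃ n, star (Ks n) (U n) = univ := by
  intro U hU
  classical
  choose E hEK hEstar using fun n => hstar (U n) (hU n)
  have haccK : ∀ n m, accU (E n) m ∈ K := by
    intro n m
    induction m with
    | zero => exact hEK n 0
    | succ k ih => exact hK _ ih _ (hEK n (k + 1))
  -- for each x and n, find an m with x ∈ star (accU (E n) m) (U n)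
  have hmem : ∀ (x : X) (n : ℕ), ∃ m, x ∈ star (accU (E n) m) (U n) := by
    intro x n
    have hx : x ∈ star (⋃ m, E n m) (U n) := by
      rw [hEstar n]; trivial
    obtain ⟨u, ⟨hu, y, hyu, hyE⟩, hxu⟩ := hx
    obtain ⟨m, hym⟩ := mem_iUnion.mp hyE
    exact ⟨m, u, ⟨hu, y, hyu, subset_accU (E n) m hym⟩, hxu⟩
  choose f hf using hmem
  -- the family {f x : x ∈ X} is not dominating
  have hnotdom : ¬ ∀ g : ℕ → ℕ, ∃ d ∈ Set.range f, ∀ᶠ n in atTop, g n ≤ d n := by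
    intro hdom
    have h1 : domNum ≤ Cardinal.mk (Set.range f) :=
      csInf_le' ⟨Set.range f, rfl, hdom⟩
    have h2 : Cardinal.lift.{u} (Cardinal.mk (Set.range f)) ≤
        Cardinal.lift.{0} (Cardinal.mk X) := Cardinal.mk_range_le_lift
    have h3 : Cardinal.lift.{u} domNum ≤ Cardinal.mk X := by
      calc Cardinal.lift.{u} domNum ≤ Cardinal.lift.{u} (Cardinal.mk (Set.range f)) :=
            Cardinal.lift_le.mpr h1
        _ ≤ Cardinal.lift.{0} (Cardinal.mk X) := h2
        _ = Cardinal.mk X := Cardinal.lift_id' _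
    exact absurd hcard (not_lt.mpr h3)
  push_neg at hnotdom
  obtain ⟨g, hg⟩ := hnotdom
  refine ⟨fun n => accU (E n) (g n), fun n => haccK n (g n), ?_⟩
  ext x
  simp only [mem_iUnion, mem_univ, iff_true]
  have hgx := hg (f x) ⟨x, rfl⟩
  have : ∃ n, ¬ g n ≤ f x n := by
    by_contra hc
    push_neg at hc
    exact hgx (Eventually.of_forall fun n => not_lt.mpr (hc n))
  obtain ⟨n, hn⟩ := this
  exact ⟨n, star_mono' (accU_mono (E n) (le_of_not_ge hn)) (U n) (hf x n)⟩
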